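/- Explicit distribution for the generalized sampling urn: for n, m ≥ 1 and 1 ≤ k ≤ n, P(X_{n,m} = k) = (∏_{h=1}^{m} β_h)(∏_{h=k+1}^{n} α_h) · Σ_{ℓ=1}^{m} 1/[(∏_{j=k}^{n}(α_j + β_ℓ)) · (∏_{i=1, i≠ℓ}^{m}(β_i − β_ℓ))]. -/

import Mathlib

open Finset

/-- Urn model I (sampling with general weights): probability that `k` white balls remain when
all black balls have been drawn. -/
noncomputable def urnP (α β : ℕ → ℝ) : ℕ → ℕ → ℕ → ℝ
  | n, 0, k => if k = n then 1 else 0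
  | 0, _ + 1, k => if k = 0 then 1 else 0
  | n + 1, m + 1, k =>
      α (n + 1) / (α (n + 1) + β (m + 1)) * urnP α β n (m + 1) k
        + β (m + 1) / (α (n + 1) + β (m + 1)) * urnP α β (n + 1) m k

/-- The conjectured closed form. -/
noncomputable def urnF (α β : ℕ → ℝ) (k n m : ℕ) : ℝ :=
  (∏ h ∈ Icc 1 m, β h) * (∏ h ∈ Icc (k + 1) n, α h)
    * ∑ ℓ ∈ Icc 1 m,
        ((∏ j ∈ Icc k n, (α j + β ℓ)) * ∏ i ∈ (Icc 1 m).erase ℓ, (β i - β ℓ))⁻¹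

lemma urnP_of_lt (α β : ℕ → ℝ) : ∀ n m k, n < k → urnP α β n m k = 0
  | n, 0, k, h => by rw [urnP]; simp; omega
  | 0, m + 1, k, h => by rw [urnP]; simp; omega
  | n + 1, m + 1, k, h => by
      rw [urnP, urnP_of_lt α β n (m + 1) k (by omega), urnP_of_lt α β (n + 1) m k h]; ring

lemma inv_cancel_aux (a x y : ℝ) (ha : a ≠ 0) (h : x = y * a) : a * x⁻¹ = y⁻¹ := by
  subst h
  rw [mul_inv, show a * (y⁻¹ * a⁻¹) = y⁻¹ * (a * a⁻¹) by ring, mul_inv_cancel₀ ha, mul_one]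

lemma sum_inv_prod_sub_eq_zero {s : Finset ℕ} {v : ℕ → ℝ} (hv : Set.InjOn v s)
    (hs : 2 ≤ s.card) : ∑ ℓ ∈ s, ∏ i ∈ s.erase ℓ, (v i - v ℓ)⁻¹ = 0 := by
  have h0 : ∑ i ∈ s, ∏ j ∈ s.erase i, (v i - v j)⁻¹ = 0 := by
    have h := Lagrange.sum_basis hv (card_pos.mp (by omega))
    have h2 := congrArg (fun p => Polynomial.coeff p (s.card - 1)) h
    simp only [Polynomial.finset_sum_coeff] at h2
    rw [Polynomial.coeff_one, if_neg (by omega)] at h2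
    rw [← h2]
    refine Finset.sum_congr rfl fun i hi => ?_
    have hd := Lagrange.natDegree_basis hv hi
    have : (Lagrange.basis s v i).coeff (s.card - 1) = (Lagrange.basis s v i).leadingCoeff := by
      rw [Polynomial.leadingCoeff, hd]
    rw [this, Lagrange.basis, Polynomial.leadingCoeff_prod]
    refine Finset.prod_congr rfl fun j hj => ?_
    have hne : v i ≠ v j := by
      rcases Finset.mem_erase.mp hj with ⟨hij, hj'⟩
      exact fun hvv => hij.symm (hv hi hj' hvv)
    rw [Lagrange.basisDivisor, Polynomial.leadingCoeff_mul, Polynomial.leadingCoeff_C,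
      Polynomial.leadingCoeff_X_sub_C, mul_one]
  calc ∑ ℓ ∈ s, ∏ i ∈ s.erase ℓ, (v i - v ℓ)⁻¹
      = ∑ ℓ ∈ s, (-1 : ℝ) ^ (s.card - 1) * ∏ i ∈ s.erase ℓ, (v ℓ - v i)⁻¹ := by
        refine Finset.sum_congr rfl fun ℓ hℓ => ?_
        rw [← Finset.card_erase_of_mem hℓ, ← Finset.prod_const, ← Finset.prod_mul_distrib]
        refine Finset.prod_congr rfl fun i hi => ?_
        rw [neg_one_mul, ← inv_neg, neg_sub]
    _ = 0 := by rw [← Finset.mul_sum, h0, mul_zero]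

section
variable (α β : ℕ → ℝ)

lemma hD_aux {m ℓ : ℕ} (hℓ : ℓ ∈ Icc 1 m) :
    ∏ i ∈ (Icc 1 (m + 1)).erase ℓ, (β i - β ℓ)
      = (∏ i ∈ (Icc 1 m).erase ℓ, (β i - β ℓ)) * (β (m + 1) - β ℓ) := by
  have hins : (Icc 1 (m + 1)).erase ℓ = insert (m + 1) ((Icc 1 m).erase ℓ) := by
    rw [mem_Icc] at hℓ
    ext x
    simp only [mem_erase, mem_Icc, mem_insert]
    omega
  rw [hins, prod_insert (by simp), mul_comm]

lemma idA (hαpos : ∀ j, 1 ≤ j → 0 < α j) (hβpos : ∀ i, 1 ≤ i → 0 < β i)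
    (hβdist : ∀ i ℓ, 1 ≤ i → 1 ≤ ℓ → i ≠ ℓ → β i ≠ β ℓ)
    (k n m : ℕ) (hk : 1 ≤ k) (hkn : k ≤ n) :
    α (n + 1) * urnF α β k n (m + 1) + β (m + 1) * urnF α β k (n + 1) m
      = (α (n + 1) + β (m + 1)) * urnF α β k (n + 1) (m + 1) := by
  have hαn : 0 < α (n + 1) := hαpos (n + 1) (by omega)
  have hβℓpos : ∀ ℓ ∈ Icc 1 (m + 1), 0 < β ℓ := fun ℓ hℓ => hβpos ℓ (mem_Icc.mp hℓ).1
  have hsub : ∀ ℓ ∈ Icc 1 m, β (m + 1) - β ℓ ≠ 0 := fun ℓ hℓ =>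
    sub_ne_zero_of_ne (hβdist (m + 1) ℓ (by omega) (mem_Icc.mp hℓ).1
      (by have := (mem_Icc.mp hℓ).2; omega))
  have e2 : urnF α β k (n + 1) m
      = (∏ h ∈ Icc 1 m, β h) * ((∏ h ∈ Icc (k + 1) n, α h) * α (n + 1))
        * ∑ ℓ ∈ Icc 1 m,
            ((∏ j ∈ Icc k n, (α j + β ℓ)) * (α (n + 1) + β ℓ)
              * ∏ i ∈ (Icc 1 m).erase ℓ, (β i - β ℓ))⁻¹ := by
    rw [urnF, prod_Icc_succ_top (by omega : k + 1 ≤ n + 1)]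
    congr 1
    refine sum_congr rfl fun ℓ hℓ => ?_
    rw [prod_Icc_succ_top (by omega : k ≤ n + 1)]
  have e3 : urnF α β k (n + 1) (m + 1)
      = ((∏ h ∈ Icc 1 m, β h) * β (m + 1)) * ((∏ h ∈ Icc (k + 1) n, α h) * α (n + 1))
        * ∑ ℓ ∈ Icc 1 (m + 1),
            ((∏ j ∈ Icc k n, (α j + β ℓ)) * (α (n + 1) + β ℓ)
              * ∏ i ∈ (Icc 1 (m + 1)).erase ℓ, (β i - β ℓ))⁻¹ := by
    rw [urnF, prod_Icc_succ_top (by omega : k + 1 ≤ n + 1),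
      prod_Icc_succ_top (by omega : 1 ≤ m + 1)]
    congr 1
    refine sum_congr rfl fun ℓ hℓ => ?_
    rw [prod_Icc_succ_top (by omega : k ≤ n + 1)]
  have e1 : urnF α β k n (m + 1)
      = ((∏ h ∈ Icc 1 m, β h) * β (m + 1)) * (∏ h ∈ Icc (k + 1) n, α h)
        * ∑ ℓ ∈ Icc 1 (m + 1),
            ((∏ j ∈ Icc k n, (α j + β ℓ))
              * ∏ i ∈ (Icc 1 (m + 1)).erase ℓ, (β i - β ℓ))⁻¹ := by
    rw [urnF, prod_Icc_succ_top (by omega : 1 ≤ m + 1)]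
  have hkey :
      (∑ ℓ ∈ Icc 1 (m + 1),
          ((∏ j ∈ Icc k n, (α j + β ℓ))
            * ∏ i ∈ (Icc 1 (m + 1)).erase ℓ, (β i - β ℓ))⁻¹)
        + (∑ ℓ ∈ Icc 1 m,
            ((∏ j ∈ Icc k n, (α j + β ℓ)) * (α (n + 1) + β ℓ)
              * ∏ i ∈ (Icc 1 m).erase ℓ, (β i - β ℓ))⁻¹)
      = (α (n + 1) + β (m + 1))
          * ∑ ℓ ∈ Icc 1 (m + 1),
              ((∏ j ∈ Icc k n, (α j + β ℓ)) * (α (n + 1) + β ℓ)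
                * ∏ i ∈ (Icc 1 (m + 1)).erase ℓ, (β i - β ℓ))⁻¹ := by
    rw [mul_sum]
    have step : ∀ ℓ ∈ Icc 1 (m + 1),
        (α (n + 1) + β (m + 1))
            * ((∏ j ∈ Icc k n, (α j + β ℓ)) * (α (n + 1) + β ℓ)
              * ∏ i ∈ (Icc 1 (m + 1)).erase ℓ, (β i - β ℓ))⁻¹
        = ((∏ j ∈ Icc k n, (α j + β ℓ))
              * ∏ i ∈ (Icc 1 (m + 1)).erase ℓ, (β i - β ℓ))⁻¹
          + (β (m + 1) - β ℓ)
            * ((∏ j ∈ Icc k n, (α j + β ℓ)) * (α (n + 1) + β ℓ)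
              * ∏ i ∈ (Icc 1 (m + 1)).erase ℓ, (β i - β ℓ))⁻¹ := by
      intro ℓ hℓ
      have h1 : (α (n + 1) + β ℓ)
          * ((∏ j ∈ Icc k n, (α j + β ℓ)) * (α (n + 1) + β ℓ)
            * ∏ i ∈ (Icc 1 (m + 1)).erase ℓ, (β i - β ℓ))⁻¹
          = ((∏ j ∈ Icc k n, (α j + β ℓ))
            * ∏ i ∈ (Icc 1 (m + 1)).erase ℓ, (β i - β ℓ))⁻¹ :=
        inv_cancel_aux _ _ _ (ne_of_gt (add_pos hαn (hβℓpos ℓ hℓ))) (by ring)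
      linear_combination h1
    rw [sum_congr rfl step, sum_add_distrib]
    congr 1
    rw [sum_Icc_succ_top (by omega : 1 ≤ m + 1), sub_self, zero_mul, add_zero]
    refine (sum_congr rfl fun ℓ hℓ => ?_).symm
    rw [hD_aux β hℓ]
    refine inv_cancel_aux _ _ _ (hsub ℓ hℓ) ?_
    ring
  rw [e1, e2, e3]
  linear_combination
    ((∏ h ∈ Icc 1 m, β h) * β (m + 1) * (∏ h ∈ Icc (k + 1) n, α h) * α (n + 1)) * hkey

lemma idB (hαpos : ∀ j, 1 ≤ j → 0 < α j) (hβpos : ∀ i, 1 ≤ i → 0 < β i)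
    (hβdist : ∀ i ℓ, 1 ≤ i → 1 ≤ ℓ → i ≠ ℓ → β i ≠ β ℓ)
    (k m : ℕ) (hk : 1 ≤ k) (hm : 1 ≤ m) :
    (α k + β (m + 1)) * urnF α β k k (m + 1) = β (m + 1) * urnF α β k k m := by
  have hαk : 0 < α k := hαpos k hk
  have hβℓpos : ∀ ℓ ∈ Icc 1 (m + 1), 0 < β ℓ := fun ℓ hℓ => hβpos ℓ (mem_Icc.mp hℓ).1
  have hsub : ∀ ℓ ∈ Icc 1 m, β (m + 1) - β ℓ ≠ 0 := fun ℓ hℓ =>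
    sub_ne_zero_of_ne (hβdist (m + 1) ℓ (by omega) (mem_Icc.mp hℓ).1
      (by have := (mem_Icc.mp hℓ).2; omega))
  have eF : ∀ M, urnF α β k k M
      = (∏ h ∈ Icc 1 M, β h)
        * ∑ ℓ ∈ Icc 1 M, ((α k + β ℓ) * ∏ i ∈ (Icc 1 M).erase ℓ, (β i - β ℓ))⁻¹ := by
    intro M
    rw [urnF, Icc_eq_empty (by omega : ¬ k + 1 ≤ k), prod_empty, mul_one]
    congr 1
    refine sum_congr rfl fun ℓ hℓ => ?_
    rw [Icc_self, prod_singleton]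
  rw [eF, eF, prod_Icc_succ_top (by omega : 1 ≤ m + 1)]
  have hkey : (α k + β (m + 1))
      * ∑ ℓ ∈ Icc 1 (m + 1), ((α k + β ℓ) * ∏ i ∈ (Icc 1 (m + 1)).erase ℓ, (β i - β ℓ))⁻¹
      = ∑ ℓ ∈ Icc 1 m, ((α k + β ℓ) * ∏ i ∈ (Icc 1 m).erase ℓ, (β i - β ℓ))⁻¹ := by
    rw [mul_sum]
    have step : ∀ ℓ ∈ Icc 1 (m + 1),
        (α k + β (m + 1))
            * ((α k + β ℓ) * ∏ i ∈ (Icc 1 (m + 1)).erase ℓ, (β i - β ℓ))⁻¹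
        = (∏ i ∈ (Icc 1 (m + 1)).erase ℓ, (β i - β ℓ))⁻¹
          + (β (m + 1) - β ℓ)
            * ((α k + β ℓ) * ∏ i ∈ (Icc 1 (m + 1)).erase ℓ, (β i - β ℓ))⁻¹ := by
      intro ℓ hℓ
      have h1 : (α k + β ℓ)
          * ((α k + β ℓ) * ∏ i ∈ (Icc 1 (m + 1)).erase ℓ, (β i - β ℓ))⁻¹
          = (∏ i ∈ (Icc 1 (m + 1)).erase ℓ, (β i - β ℓ))⁻¹ :=
        inv_cancel_aux _ _ _ (ne_of_gt (add_pos hαk (hβℓpos ℓ hℓ))) (by ring)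
      linear_combination h1
    rw [sum_congr rfl step, sum_add_distrib]
    have hzero : ∑ ℓ ∈ Icc 1 (m + 1), (∏ i ∈ (Icc 1 (m + 1)).erase ℓ, (β i - β ℓ))⁻¹ = 0 := by
      have hinj : Set.InjOn β (Icc 1 (m + 1)) := by
        intro i hi j hj hij
        by_contra hne
        exact hβdist i j (mem_Icc.mp (Finset.mem_coe.mp hi)).1
          (mem_Icc.mp (Finset.mem_coe.mp hj)).1 hne hij
      have hcard : 2 ≤ (Icc 1 (m + 1)).card := by
        rw [Nat.card_Icc]; omega
      have h := sum_inv_prod_sub_eq_zero hinj hcard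
      rw [← h]
      exact sum_congr rfl fun ℓ hℓ => (prod_inv_distrib _).symm
    rw [hzero, zero_add]
    rw [sum_Icc_succ_top (by omega : 1 ≤ m + 1), sub_self, zero_mul, add_zero]
    refine sum_congr rfl fun ℓ hℓ => ?_
    rw [hD_aux β hℓ]
    refine inv_cancel_aux _ _ _ (hsub ℓ hℓ) ?_
    ring
  linear_combination (β (m + 1) * ∏ h ∈ Icc 1 m, β h) * hkey

lemma urnF_zero (k n : ℕ) : urnF α β k n 0 = 0 := by
  simp [urnF]

end

theorem urnP_explicit (α β : ℕ → ℝ)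
    (hαpos : ∀ j, 1 ≤ j → 0 < α j) (hβpos : ∀ i, 1 ≤ i → 0 < β i)
    (hαdist : ∀ j ℓ, 1 ≤ j → 1 ≤ ℓ → j ≠ ℓ → α j ≠ α ℓ)
    (hβdist : ∀ i ℓ, 1 ≤ i → 1 ≤ ℓ → i ≠ ℓ → β i ≠ β ℓ)
    (n m k : ℕ) (hn : 1 ≤ n) (hm : 1 ≤ m) (hk : 1 ≤ k) (hkn : k ≤ n) :
    urnP α β n m k
      = (∏ h ∈ Icc 1 m, β h) * (∏ h ∈ Icc (k + 1) n, α h)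
        * ∑ ℓ ∈ Icc 1 m,
            ((∏ j ∈ Icc k n, (α j + β ℓ)) * ∏ i ∈ (Icc 1 m).erase ℓ, (β i - β ℓ))⁻¹ := by
  obtain ⟨k', rfl⟩ : ∃ k', k = k' + 1 := ⟨k - 1, by omega⟩
  set_option linter.unusedVariables false in
  suffices H : ∀ N, k' + 1 ≤ N → ∀ M, 1 ≤ M → urnP α β N M (k' + 1) = urnF α β (k' + 1) N M by
    exact H n hkn m hm
  intro N hN
  induction N, hN using Nat.le_induction with
  | base =>
    intro M hM
    induction M, hM using Nat.le_induction with
    | base =>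
      -- urnP k 1 k = urnF k k 1
      have hS : α (k' + 1) + β 1 ≠ 0 := ne_of_gt (add_pos (hαpos (k' + 1) hk) (hβpos 1 le_rfl))
      rw [show urnP α β (k' + 1) 1 (k' + 1) = urnP α β (k' + 1) (0 + 1) (k' + 1) from rfl, urnP]
      rw [urnP_of_lt α β k' 1 (k' + 1) (by omega)]
      rw [show urnP α β (k' + 1) 0 (k' + 1) = if k' + 1 = k' + 1 then (1:ℝ) else 0 from by
        rw [urnP], if_pos rfl]
      rw [urnF]
      rw [Icc_eq_empty (by omega : ¬ k' + 1 + 1 ≤ k' + 1), prod_empty]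
      simp only [Icc_self, prod_singleton, sum_singleton, erase_singleton, prod_empty, mul_one,
        one_mul, mul_zero, zero_add]
      rw [div_eq_mul_inv, mul_comm]
    | succ M hM ih =>
      have hS : α (k' + 1) + β (M + 1) ≠ 0 :=
        ne_of_gt (add_pos (hαpos (k' + 1) hk) (hβpos (M + 1) (by omega)))
      rw [urnP]
      rw [urnP_of_lt α β k' (M + 1) (k' + 1) (by omega), ih]
      have hB := idB α β hαpos hβpos hβdist (k' + 1) M hk hM
      field_simp
      linear_combination -hB
  | succ N hN ihN =>
    intro M hM
    induction M, hM using Nat.le_induction with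
    | base =>
      have hS : α (N + 1) + β 1 ≠ 0 :=
        ne_of_gt (add_pos (hαpos (N + 1) (by omega)) (hβpos 1 le_rfl))
      rw [show urnP α β (N + 1) 1 (k' + 1) = urnP α β (N + 1) (0 + 1) (k' + 1) from rfl, urnP]
      rw [ihN 1 le_rfl]
      rw [show urnP α β (N + 1) 0 (k' + 1) = (if k' + 1 = N + 1 then (1:ℝ) else 0) from by
        rw [urnP], if_neg (by omega)]
      have hA := idA α β hαpos hβpos hβdist (k' + 1) N 0 hk hN
      rw [urnF_zero] at hA
      simp only [zero_add] at hA ⊢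
      field_simp
      linear_combination hA
    | succ M hM ih =>
      have hS : α (N + 1) + β (M + 1) ≠ 0 :=
        ne_of_gt (add_pos (hαpos (N + 1) (by omega)) (hβpos (M + 1) (by omega)))
      rw [urnP, ihN (M + 1) (by omega), ih]
      have hA := idA α β hαpos hβpos hβdist (k' + 1) N M hk hN
      field_simp
      linear_combination hA
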